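/- Let coGap be the increasing multi-family on ℕ defined below. Then for every subset S of ℕ, the outer core satisfies Out(coGap)(S) = min(2, coGap(S)). -/

import Mathlib

/-- `coGap S` is the supremum of the `k : ℕ` such that `S` contains runs of `k`
consecutive integers arbitrarily far out. -/
noncomputable def coGap (S : Set ℕ) : ℕ∞ :=
  ⨆ (k : ℕ) (_ : ∀ N : ℕ, ∃ n ≥ N, ∀ i < k, n + i ∈ S), (k : ℕ∞)

/-- The *outer core* of a multi-family `M` on `X`: the infimum of `M S₁ + … + M S_k`
over all finite families `S₁, …, S_k` with `S₁ ∪ … ∪ S_k = S`. -/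
noncomputable def OutCore {X : Type*} (M : Set X → ℕ∞) (S : Set X) : ℕ∞ :=
  ⨅ (k : ℕ) (T : Fin k → Set X) (_ : (⋃ i, T i) = S), ∑ i, M (T i)

private lemma le_coGap {S : Set ℕ} {k : ℕ} (h : ∀ N : ℕ, ∃ n ≥ N, ∀ i < k, n + i ∈ S) :
    (k : ℕ∞) ≤ coGap S :=
  le_iSup₂ (f := fun (k : ℕ) (_ : ∀ N : ℕ, ∃ n ≥ N, ∀ i < k, n + i ∈ S) => (k : ℕ∞)) k h

private lemma coGap_le {S : Set ℕ} {m : ℕ∞}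
    (h : ∀ k : ℕ, (∀ N : ℕ, ∃ n ≥ N, ∀ i < k, n + i ∈ S) → (k : ℕ∞) ≤ m) :
    coGap S ≤ m := iSup₂_le h

private lemma pigeon {ι : Type*} [Fintype ι] (A : Set ℕ)
    (hA : ∀ N : ℕ, ∃ n ≥ N, n ∈ A) (Q : ℕ → ι → Prop) (hQ : ∀ n ∈ A, ∃ i, Q n i) :
    ∃ i, ∀ N : ℕ, ∃ n ≥ N, n ∈ A ∧ Q n i := by
  by_contra h
  push_neg at h
  choose N hN using h
  obtain ⟨n, hn, hnA⟩ := hA (Finset.univ.sup N)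
  obtain ⟨i, hi⟩ := hQ n hnA
  exact hN i n (le_trans (Finset.le_sup (Finset.mem_univ i)) hn) hnA hi

private lemma coGap_parity_le (S : Set ℕ) (r : ℕ) :
    coGap {n | n ∈ S ∧ n % 2 = r} ≤ 1 := by
  apply coGap_le
  intro k hk
  rcases Nat.lt_or_ge k 2 with h | h
  · exact_mod_cast Nat.lt_succ_iff.mp h
  · exfalso
    obtain ⟨n, -, hn⟩ := hk 0
    have h0 := hn 0 (by omega)
    have h1 := hn 1 (by omega)
    simp only [Set.mem_setOf_eq] at h0 h1
    omega

/-- The outer core of `coGap` is `min 2 (coGap S)`. -/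
theorem outCore_coGap (S : Set ℕ) : OutCore coGap S = min 2 (coGap S) := by
  apply le_antisymm
  · apply le_min
    · -- cover by parities
      have hcov : (⋃ i : Fin 2, (![{n | n ∈ S ∧ n % 2 = 0}, {n | n ∈ S ∧ n % 2 = 1}] i)) = S := by
        ext n
        simp only [Set.mem_iUnion, Fin.exists_fin_two]
        simp only [Matrix.cons_val_zero, Matrix.cons_val_one, Matrix.head_cons,
          Set.mem_setOf_eq]
        constructor
        · rintro (⟨h, -⟩ | ⟨h, -⟩) <;> exact h
        · intro h
          rcases Nat.mod_two_eq_zero_or_one n with h2 | h2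
          · exact Or.inl ⟨h, h2⟩
          · exact Or.inr ⟨h, h2⟩
      refine le_trans (iInf_le _ 2) (le_trans (iInf_le _ _) (le_trans (iInf_le _ hcov) ?_))
      rw [Fin.sum_univ_two]
      simp only [Matrix.cons_val_zero, Matrix.cons_val_one, Matrix.head_cons]
      calc coGap {n | n ∈ S ∧ n % 2 = 0} + coGap {n | n ∈ S ∧ n % 2 = 1}
          ≤ 1 + 1 := add_le_add (coGap_parity_le S 0) (coGap_parity_le S 1)
        _ = 2 := by norm_num
    · refine le_trans (iInf_le _ 1) (le_trans (iInf_le _ (fun _ => S))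
        (le_trans (iInf_le _ (Set.iUnion_const S)) ?_))
      simp
  · refine le_iInf fun k => le_iInf fun T => le_iInf fun hT => ?_
    by_cases h2 : ∀ N : ℕ, ∃ n ≥ N, ∀ i < 2, n + i ∈ S
    · refine le_trans (min_le_left _ _) ?_
      set A : Set ℕ := {n | n ∈ S ∧ n + 1 ∈ S} with hA_def
      have hA : ∀ N : ℕ, ∃ n ≥ N, n ∈ A := by
        intro N
        obtain ⟨n, hn, h⟩ := h2 N
        exact ⟨n, hn, (h 0 (by omega)), by have := h 1 (by omega); simpa using this⟩
      have hQ : ∀ n ∈ A, ∃ p : Fin k × Fin k, n ∈ T p.1 ∧ n + 1 ∈ T p.2 := by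
        rintro n ⟨hn1, hn2⟩
        rw [← hT] at hn1 hn2
        obtain ⟨i, hi⟩ := Set.mem_iUnion.mp hn1
        obtain ⟨j, hj⟩ := Set.mem_iUnion.mp hn2
        exact ⟨(i, j), hi, hj⟩
      obtain ⟨⟨i, j⟩, hij⟩ := pigeon A hA _ hQ
      by_cases hij' : i = j
      · subst hij'
        have h2i : ((2 : ℕ) : ℕ∞) ≤ coGap (T i) := by
          apply le_coGap
          intro N
          obtain ⟨n, hn, -, hni, hni'⟩ := hij N
          refine ⟨n, hn, fun m hm => ?_⟩
          interval_cases m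
          · simpa using hni
          · exact hni'
        refine le_trans ?_ (Finset.single_le_sum (f := fun i => coGap (T i))
          (fun _ _ => zero_le) (Finset.mem_univ i))
        exact_mod_cast h2i
      · have h1 : ∀ l : Fin k, (∀ N : ℕ, ∃ n ≥ N, n ∈ T l) → (1 : ℕ∞) ≤ coGap (T l) := by
          intro l hl
          have := le_coGap (S := T l) (k := 1) (fun N => by
            obtain ⟨n, hn, hnl⟩ := hl N
            exact ⟨n, hn, fun m hm => by interval_cases m; simpa using hnl⟩)
          simpa using this
        have hi1 : (1 : ℕ∞) ≤ coGap (T i) := h1 i (fun N => by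
          obtain ⟨n, hn, -, hni, -⟩ := hij N; exact ⟨n, hn, hni⟩)
        have hj1 : (1 : ℕ∞) ≤ coGap (T j) := h1 j (fun N => by
          obtain ⟨n, hn, -, -, hnj⟩ := hij N; exact ⟨n + 1, by omega, hnj⟩)
        calc (2 : ℕ∞) = 1 + 1 := by norm_num
          _ ≤ coGap (T i) + coGap (T j) := add_le_add hi1 hj1
          _ = ∑ l ∈ ({i, j} : Finset (Fin k)), coGap (T l) := (Finset.sum_pair (f := fun l => coGap (T l)) hij').symm
          _ ≤ ∑ l, coGap (T l) := Finset.sum_le_sum_of_subset (Finset.subset_univ _)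
    · refine le_trans (min_le_right _ _) ?_
      by_cases h1 : ∀ N : ℕ, ∃ n ≥ N, n ∈ S
      · have hle : coGap S ≤ 1 := by
          apply coGap_le
          intro m hm
          rcases Nat.lt_or_ge m 2 with h | h
          · exact_mod_cast Nat.lt_succ_iff.mp h
          · exact absurd (fun N => by
              obtain ⟨n, hn, hni⟩ := hm N
              exact ⟨n, hn, fun i hi => hni i (by omega)⟩) h2
        obtain ⟨i, hi⟩ := pigeon S h1 (fun n i => n ∈ T i) (by
          intro n hn
          rw [← hT] at hn
          exact Set.mem_iUnion.mp hn)
        have : (1 : ℕ∞) ≤ coGap (T i) := by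
          have := le_coGap (S := T i) (k := 1) (fun N => by
            obtain ⟨n, hn, -, hni⟩ := hi N
            exact ⟨n, hn, fun m hm => by interval_cases m; simpa using hni⟩)
          simpa using this
        exact le_trans hle (le_trans this (Finset.single_le_sum
          (f := fun l => coGap (T l)) (fun _ _ => zero_le) (Finset.mem_univ i)))
      · have : coGap S ≤ 0 := by
          apply coGap_le
          intro m hm
          rcases Nat.eq_zero_or_pos m with rfl | h
          · simp
          · exact absurd (fun N => by
              obtain ⟨n, hn, hni⟩ := hm N
              exact ⟨n, hn, by simpa using hni 0 h⟩) h1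
        exact le_trans this (zero_le)
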